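/- Let d be an odd positive integer, a, b positive integers with a + b = d and a ≡ ((d+1)/2)² (mod 4). Set λ₀ = √a + i√b and τ₀ = (λ₀² − d²)/(4d²). Then λ̄₀·θ₍₀₎(0, −τ̄₀) = λ₀·θ₍₀₎(0, τ₀) (equivalently, λ₀·θ₍₀₎(0, τ₀) is real), and (−1)^{(d²−1)/8}·λ̄₀·θ₍₁₎(0, −τ̄₀) = λ₀·θ₍₁₎(0, τ₀). -/

import Mathlib

/-- Theta with characteristic `θ₍₀₎(z, τ) = ∑_{m even} exp(iπ(τ/2)m²) exp(2iπmz)`. -/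
noncomputable def theta0 (z τ : ℂ) : ℂ :=
  ∑' m : ℤ, if Even m then
    Complex.exp ((Real.pi : ℂ) * Complex.I * (τ / 2) * (m : ℂ) ^ 2) *
      Complex.exp (2 * (Real.pi : ℂ) * Complex.I * (m : ℂ) * z)
  else 0

/-- Theta with characteristic `θ₍₁₎(z, τ) = ∑_{m odd} exp(iπ(τ/2)m²) exp(2iπmz)`. -/
noncomputable def theta1 (z τ : ℂ) : ℂ :=
  ∑' m : ℤ, if Odd m then
    Complex.exp ((Real.pi : ℂ) * Complex.I * (τ / 2) * (m : ℂ) ^ 2) *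
      Complex.exp (2 * (Real.pi : ℂ) * Complex.I * (m : ℂ) * z)
  else 0

open Complex


noncomputable def Th2 (τ : ℂ) : ℂ :=
  Complex.exp ((Real.pi : ℂ) * Complex.I * τ / 4) * jacobiTheta₂ (τ / 2) τ

lemma cpow_half_sq {z : ℂ} (hz : z ≠ 0) : (z ^ (1/2 : ℂ)) ^ 2 = z := by
  rw [sq, ← cpow_add _ _ hz]
  norm_num

lemma sqrt_half_lt {z : ℂ} (hz : 0 < z.re) : |(z ^ (1/2 : ℂ)).im| < (z ^ (1/2 : ℂ)).re := by
  have hz0 : z ≠ 0 := by intro h; rw [h] at hz; simp at hz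
  have harg : |z.arg| < Real.pi/2 := Complex.abs_arg_lt_pi_div_two_iff.mpr (Or.inl hz)
  rw [Complex.cpow_def_of_ne_zero hz0, Complex.exp_re, Complex.exp_im]
  have him : (Complex.log z * (1/2)).im = z.arg / 2 := by
    rw [Complex.mul_im]
    simp [Complex.log_im]
    ring
  rw [him]
  set θ := z.arg with hθ
  set E := Real.exp ((Complex.log z * (1/2)).re) with hE
  have hEpos : 0 < E := Real.exp_pos _
  have hb := abs_lt.mp harg
  have hcos : 0 < Real.cos (θ/2) := by
    apply Real.cos_pos_of_mem_Ioo
    constructor <;> [linarith [Real.pi_pos]; linarith [Real.pi_pos]]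
  have hcosθ : 0 < Real.cos θ := by
    apply Real.cos_pos_of_mem_Ioo
    constructor <;> linarith
  have hct : Real.cos θ = 2 * Real.cos (θ/2)^2 - 1 := by
    have h := Real.cos_two_mul (θ/2)
    rw [show 2*(θ/2) = θ by ring] at h
    linarith
  have hs : Real.sin (θ/2)^2 + Real.cos (θ/2)^2 = 1 := Real.sin_sq_add_cos_sq _
  have hlt : |Real.sin (θ/2)| < Real.cos (θ/2) := by
    nlinarith [abs_nonneg (Real.sin (θ/2)), _root_.sq_abs (Real.sin (θ/2))]
  calc |E * Real.sin (θ/2)| = E * |Real.sin (θ/2)| := by rw [abs_mul, abs_of_pos hEpos]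
  _ < E * Real.cos (θ/2) := (mul_lt_mul_iff_right₀ hEpos).mpr hlt

lemma mul_re_pos' {x y : ℂ} (hx : |x.im| < x.re) (hy : |y.im| < y.re) : 0 < (x*y).re := by
  rw [Complex.mul_re]
  have h1 := mul_lt_mul'' hx hy (abs_nonneg x.im) (abs_nonneg y.im)
  have h2 : x.im*y.im ≤ |x.im| * |y.im| := by rw [← abs_mul]; exact le_abs_self _
  linarith

lemma div_re_pos' {x y : ℂ} (hx : |x.im| < x.re) (hy : |y.im| < y.re) : 0 < (x/y).re := by
  have hy0 : y ≠ 0 := by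
    intro h
    rw [h] at hy
    simp at hy
  rw [Complex.div_re]
  have h1 := mul_lt_mul'' hx hy (abs_nonneg x.im) (abs_nonneg y.im)
  have h2 : -(x.im*y.im) ≤ |x.im| * |y.im| := by rw [← abs_mul]; exact neg_le_abs _
  have h3 : 0 < Complex.normSq y := Complex.normSq_pos.mpr hy0
  have h4 : 0 < x.re*y.re + x.im*y.im := by linarith
  calc (0:ℝ) < (x.re * y.re + x.im * y.im) / normSq y := div_pos h4 h3
  _ = x.re * y.re / normSq y + x.im * y.im / normSq y := by ring

lemma sq_eq_pos {M Q : ℂ} (h : M^2 = Q^2) (hM : 0 < M.re) (hQ : 0 < Q.re) : M = Q := by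
  have h2 : (M - Q) * (M + Q) = 0 := by linear_combination h
  rcases mul_eq_zero.mp h2 with h3 | h3
  · exact sub_eq_zero.mp h3
  · exfalso
    have : M = -Q := by linear_combination h3
    rw [this] at hM
    simp only [Complex.neg_re] at hM
    linarith


lemma jt2_per (z τ : ℂ) (k : ℤ) : jacobiTheta₂ z (τ + 2*(k:ℂ)) = jacobiTheta₂ z τ := by
  induction k using Int.induction_on with
  | zero => simp
  | succ n ih =>
      have h : τ + 2*(((n:ℤ)+1 : ℤ):ℂ) = (τ + 2*((n:ℤ):ℂ)) + 2 := by push_cast; ring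
      rw [h, jacobiTheta₂_add_right, ih]
  | pred n ih =>
      have h := jacobiTheta₂_add_right z (τ + 2*((-(n:ℤ)-1 : ℤ):ℂ))
      have h2 : τ + 2*((-(n:ℤ)-1 : ℤ):ℂ) + 2 = τ + 2*((-(n:ℤ) : ℤ):ℂ) := by push_cast; ring
      rw [h2] at h
      rw [← h]
      exact ih

lemma jt3_S {τ : ℂ} (hτ : τ ≠ 0) :
    jacobiTheta₂ 0 (-1/τ) = (-I*τ) ^ (1/2 : ℂ) * jacobiTheta₂ 0 τ := by
  have h := jacobiTheta₂_functional_equation 0 τ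
  have hX : (-I*τ) ≠ 0 := mul_ne_zero (neg_ne_zero.mpr I_ne_zero) hτ
  have hX2 : (-I*τ) ^ (1/2:ℂ) ≠ 0 := by
    rw [Ne, Complex.cpow_eq_zero_iff]
    tauto
  have h0 : -(Real.pi:ℂ) * I * (0:ℂ)^2 / τ = 0 := by simp
  rw [h0, Complex.exp_zero, zero_div] at h
  rw [h]
  field_simp

lemma th2_S {τ : ℂ} (hτ : τ ≠ 0) :
    jacobiTheta₂ (1/2) (-1/τ) = (-I*τ) ^ (1/2 : ℂ) * Th2 τ := by
  have h := jacobiTheta₂_functional_equation (τ/2) τ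
  have hX : (-I*τ) ≠ 0 := mul_ne_zero (neg_ne_zero.mpr I_ne_zero) hτ
  have hX2 : (-I*τ) ^ (1/2:ℂ) ≠ 0 := by
    rw [Ne, Complex.cpow_eq_zero_iff]
    tauto
  have e1 : τ/2/τ = 1/2 := by
    field_simp
  have e2 : -(Real.pi:ℂ) * I * (τ/2)^2 / τ = -((Real.pi:ℂ) * I * τ / 4) := by
    field_simp
    ring
  rw [e1, e2] at h
  rw [Th2, h, Complex.exp_neg]
  field_simp [Complex.exp_ne_zero]

lemma th2_add_two (τ : ℂ) : Th2 (τ + 2) = I * Th2 τ := by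
  have e1 : (τ+2)/2 = τ/2 + 1 := by ring
  have e2 : (Real.pi:ℂ) * I * (τ+2) / 4 = (Real.pi:ℂ)*I*τ/4 + (Real.pi/2 : ℂ)*I := by
    ring
  rw [Th2, Th2, e1, e2, jacobiTheta₂_add_right, jacobiTheta₂_add_left, Complex.exp_add]
  have e3 : Complex.exp ((Real.pi/2 : ℂ)*I) = I := by
    rw [Complex.exp_mul_I]
    have : ((Real.pi/2 : ℝ) : ℂ) = (Real.pi/2 : ℂ) := by push_cast; ring
    rw [← this, ← Complex.ofReal_cos, ← Complex.ofReal_sin, Real.cos_pi_div_two,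
      Real.sin_pi_div_two]
    simp
  rw [e3]
  ring

lemma th2_per (τ : ℂ) (k : ℤ) : Th2 (τ + 2*(k:ℂ)) = I^k * Th2 τ := by
  induction k using Int.induction_on with
  | zero => simp
  | succ n ih =>
      have h : τ + 2*(((n:ℤ)+1 : ℤ):ℂ) = (τ + 2*((n:ℤ):ℂ)) + 2 := by push_cast; ring
      rw [h, th2_add_two, ih, zpow_add₀ I_ne_zero]
      simp
      ring
  | pred n ih =>
      have h2 : (τ + 2*((-(n:ℤ)-1 : ℤ):ℂ)) + 2 = τ + 2*((-(n:ℤ) : ℤ):ℂ) := by push_cast; ring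
      have h := th2_add_two (τ + 2*((-(n:ℤ)-1 : ℤ):ℂ))
      rw [h2, ih] at h
      apply mul_left_cancel₀ I_ne_zero
      rw [← h, zpow_sub₀ I_ne_zero, zpow_one]
      field_simp

lemma neg_one_div_im {w : ℂ} : (-1/w).im = w.im / Complex.normSq w := by
  rw [neg_div, one_div, Complex.neg_im, Complex.inv_im]
  ring

section transforms
variable {η Q : ℂ}

lemma theta3_transform (k : ℤ) (hη : 0 < η.im) (hQ2 : Q^2 = 1 + 2*(k:ℂ)*η)
    (hQre : 0 < Q.re) :
    jacobiTheta₂ 0 (η / Q^2) = Q * jacobiTheta₂ 0 η := by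
  have hη0 : η ≠ 0 := by intro h; rw [h] at hη; simp at hη
  have hQ0 : Q ≠ 0 := by intro h; rw [h] at hQre; simp at hQre
  have hc0 : Q^2 ≠ 0 := pow_ne_zero 2 hQ0
  set τ₁ : ℂ := -1/η + 2*((-k : ℤ):ℂ) with hτ₁def
  have hτ₁im : 0 < τ₁.im := by
    have e : τ₁.im = η.im / Complex.normSq η := by
      rw [hτ₁def, Complex.add_im, neg_one_div_im]
      simp
    rw [e]
    exact div_pos hη (Complex.normSq_pos.mpr hη0)
  have hτ₁0 : τ₁ ≠ 0 := by intro h; rw [h] at hτ₁im; simp at hτ₁im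
  have hτη : τ₁ * η = -1 - 2*(k:ℂ)*η := by
    rw [hτ₁def]
    push_cast
    field_simp
    ring
  have hpt : -1/τ₁ = η / Q^2 := by
    rw [div_eq_div_iff hτ₁0 hc0, hQ2]
    linear_combination -hτη
  have h1 := jt3_S hη0
  have h2 := jt3_S hτ₁0
  have h3 : jacobiTheta₂ 0 τ₁ = jacobiTheta₂ 0 (-1/η) := jt2_per 0 (-1/η) (-k)
  have hre1 : 0 < (-I*η).re := by simp [Complex.mul_re]; exact hη
  have hre2 : 0 < (-I*τ₁).re := by simp [Complex.mul_re]; exact hτ₁im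
  have hM : (-I*τ₁) ^ (1/2:ℂ) * (-I*η) ^ (1/2:ℂ) = Q := by
    apply sq_eq_pos _ (mul_re_pos' (sqrt_half_lt hre2) (sqrt_half_lt hre1)) hQre
    rw [mul_pow, cpow_half_sq (by intro h; rw [h] at hre2; simp at hre2),
      cpow_half_sq (by intro h; rw [h] at hre1; simp at hre1), hQ2]
    linear_combination (τ₁*η) * Complex.I_sq - hτη
  calc jacobiTheta₂ 0 (η / Q^2) = jacobiTheta₂ 0 (-1/τ₁) := by rw [hpt]
  _ = (-I*τ₁) ^ (1/2:ℂ) * jacobiTheta₂ 0 τ₁ := h2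
  _ = (-I*τ₁) ^ (1/2:ℂ) * ((-I*η) ^ (1/2:ℂ) * jacobiTheta₂ 0 η) := by rw [h3, h1]
  _ = Q * jacobiTheta₂ 0 η := by rw [← hM]; ring

lemma theta2_transform (k : ℤ) (hη : 0 < η.im) (hQ2 : Q^2 = 1 + 2*(k:ℂ)*η)
    (hQre : 0 < Q.re) :
    Th2 (η / Q^2) = Q * Th2 η := by
  have hη0 : η ≠ 0 := by intro h; rw [h] at hη; simp at hη
  have hQ0 : Q ≠ 0 := by intro h; rw [h] at hQre; simp at hQre
  have hc0 : Q^2 ≠ 0 := pow_ne_zero 2 hQ0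
  set τ₁ : ℂ := -1/η + 2*((-k : ℤ):ℂ) with hτ₁def
  have hτ₁im : 0 < τ₁.im := by
    have e : τ₁.im = η.im / Complex.normSq η := by
      rw [hτ₁def, Complex.add_im, neg_one_div_im]
      simp
    rw [e]
    exact div_pos hη (Complex.normSq_pos.mpr hη0)
  have hτ₁0 : τ₁ ≠ 0 := by intro h; rw [h] at hτ₁im; simp at hτ₁im
  have hτη : τ₁ * η = -1 - 2*(k:ℂ)*η := by
    rw [hτ₁def]
    push_cast
    field_simp
    ring
  have hpt : -1/τ₁ = η / Q^2 := by
    rw [div_eq_div_iff hτ₁0 hc0, hQ2]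
    linear_combination -hτη
  have ht0 : η / Q^2 ≠ 0 := div_ne_zero hη0 hc0
  have hback : -1/(η / Q^2) = τ₁ := by
    rw [← hpt]
    field_simp
  have htim : 0 < (η / Q^2).im := by
    rw [← hpt, neg_one_div_im]
    exact div_pos hτ₁im (Complex.normSq_pos.mpr hτ₁0)
  have h1 := th2_S hη0
  have h2 := th2_S ht0
  rw [hback] at h2
  have h3 : jacobiTheta₂ (1/2) τ₁ = jacobiTheta₂ (1/2) (-1/η) := jt2_per (1/2) (-1/η) (-k)
  have hre1 : 0 < (-I*η).re := by simp [Complex.mul_re]; exact hη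
  have hre3 : 0 < (-I*(η / Q^2)).re := by simp [Complex.mul_re]; exact htim
  have hs0 : (-I*(η / Q^2)) ^ (1/2:ℂ) ≠ 0 := by
    rw [Ne, Complex.cpow_eq_zero_iff]
    intro h
    rw [h.1] at hre3
    simp at hre3
  have hz1 : (-I*η) ≠ 0 := by intro h; rw [h] at hre1; simp at hre1
  have hz3 : (-I*(η / Q^2)) ≠ 0 := by intro h; rw [h] at hre3; simp at hre3
  have hM : (-I*η) ^ (1/2:ℂ) / (-I*(η / Q^2)) ^ (1/2:ℂ) = Q := by
    apply sq_eq_pos _ (div_re_pos' (sqrt_half_lt hre1) (sqrt_half_lt hre3)) hQre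
    rw [div_pow, cpow_half_sq hz1, cpow_half_sq hz3, div_eq_iff hz3]
    field_simp
  have key : (-I*(η / Q^2)) ^ (1/2:ℂ) * Th2 (η / Q^2) = (-I*η) ^ (1/2:ℂ) * Th2 η := by
    rw [← h2, h3, h1]
  calc Th2 (η / Q^2)
      = ((-I*η) ^ (1/2:ℂ) / (-I*(η / Q^2)) ^ (1/2:ℂ)) * Th2 η := by
        rw [div_mul_eq_mul_div, ← key]
        field_simp
  _ = Q * Th2 η := by rw [hM]


end transforms

lemma theta0_eq (τ : ℂ) : theta0 0 τ = jacobiTheta₂ 0 (2*τ) := by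
  rw [theta0, jacobiTheta₂]
  refine tsum_eq_tsum_of_ne_zero_bij (fun n => 2*(n.1:ℤ)) ?_ ?_ ?_
  · intro x y h
    simp only at h
    exact Subtype.ext (by omega)
  · intro m hm
    simp only [Function.mem_support, ne_eq, ite_eq_right_iff, not_forall] at hm
    obtain ⟨hev, -⟩ := hm
    obtain ⟨n, rfl⟩ : ∃ n, m = 2*n := by obtain ⟨r, hr⟩ := hev; exact ⟨r, by omega⟩
    refine ⟨⟨n, ?_⟩, rfl⟩
    simp only [Function.mem_support, ne_eq, jacobiTheta₂_term]
    exact Complex.exp_ne_zero _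
  · intro x
    rw [if_pos (even_two_mul _), jacobiTheta₂_term]
    rw [← Complex.exp_add]
    congr 1
    push_cast
    ring

lemma theta1_eq (τ : ℂ) : theta1 0 τ = Th2 (2*τ) := by
  rw [theta1, Th2, jacobiTheta₂, ← tsum_mul_left]
  refine tsum_eq_tsum_of_ne_zero_bij (fun n => 2*(n.1:ℤ)+1) ?_ ?_ ?_
  · intro x y h
    simp only at h
    exact Subtype.ext (by omega)
  · intro m hm
    simp only [Function.mem_support, ne_eq, ite_eq_right_iff, not_forall] at hm
    obtain ⟨hodd, -⟩ := hm
    obtain ⟨n, rfl⟩ : ∃ n, m = 2*n+1 := hodd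
    refine ⟨⟨n, ?_⟩, rfl⟩
    simp only [Function.mem_support, ne_eq, jacobiTheta₂_term]
    exact mul_ne_zero (Complex.exp_ne_zero _) (Complex.exp_ne_zero _)
  · intro x
    rw [if_pos ⟨(x.1:ℤ), rfl⟩, jacobiTheta₂_term]
    rw [← Complex.exp_add, ← Complex.exp_add]
    congr 1
    push_cast
    ring

/-- Lemma 3.7: `λ̄₀θ₍₀₎(0, −τ̄₀) = λ₀θ₍₀₎(0, τ₀)` and
`(−1)^{(d²−1)/8} λ̄₀θ₍₁₎(0, −τ̄₀) = λ₀θ₍₁₎(0, τ₀)`. -/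
theorem theta_char_at_zero_reality (d a b : ℕ) (hd : Odd d) (hd0 : 0 < d)
    (ha : 0 < a) (hb : 0 < b) (hab : a + b = d)
    (hmod : a ≡ ((d + 1) / 2) ^ 2 [MOD 4])
    (l0 t0 : ℂ)
    (hl0 : l0 = (Real.sqrt a : ℂ) + Complex.I * Real.sqrt b)
    (ht0 : t0 = (l0 ^ 2 - (d : ℂ) ^ 2) / (4 * (d : ℂ) ^ 2)) :
    ((starRingEnd ℂ) l0 * theta0 0 (-(starRingEnd ℂ) t0) = l0 * theta0 0 t0) ∧
    ((-1 : ℂ) ^ ((d ^ 2 - 1) / 8) * (starRingEnd ℂ) l0 * theta1 0 (-(starRingEnd ℂ) t0) =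
      l0 * theta1 0 t0) := by
  obtain ⟨c, hc⟩ := hd
  have habZ : (a:ℤ) + (b:ℤ) = (d:ℤ) := by exact_mod_cast hab
  have hdZ : (d:ℤ) = 2*(c:ℤ)+1 := by exact_mod_cast hc
  obtain ⟨j, hj⟩ := Nat.even_mul_succ_self c
  have hcc : c*c + c = 2*j := by nlinarith [hj]
  have hdsq : d^2 = 8*j + 1 := by subst hc; nlinarith [hcc]
  have he : (d^2-1)/8 = j := by omega
  have hm : (d+1)/2 = c+1 := by omega
  -- the key integer
  set K : ℤ := (a:ℤ) - (c:ℤ) - 1 with hKdef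
  -- arithmetic for the sign
  have hfinal : (-1:ℂ)^((d^2-1)/8) * I^K = 1 := by
    rw [hm] at hmod
    have h4 := Nat.ModEq.dvd hmod
    push_cast at h4
    obtain ⟨q, hq⟩ := h4
    have hccZ : (c:ℤ)*c + c = 2*(j:ℤ) := by exact_mod_cast hcc
    have hsum : 2*(j:ℤ) + K = 4*((j:ℤ) - q) := by
      rw [hKdef]
      linear_combination -hq + hccZ
    rw [he]
    have hm1 : (-1:ℂ) = I^2 := by rw [Complex.I_sq]
    rw [hm1, ← pow_mul, ← zpow_natCast I, ← zpow_add₀ I_ne_zero]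
    have : ((2*j : ℕ) : ℤ) + K = 4*((j:ℤ) - q) := by push_cast; push_cast at hsum; linarith
    rw [this, zpow_mul]
    rw [show ((4:ℤ)) = ((4:ℕ):ℤ) by norm_num, zpow_natCast]
    norm_num
  -- real square roots
  have haR : (0:ℝ) < a := by exact_mod_cast ha
  have hbR : (0:ℝ) < b := by exact_mod_cast hb
  set sa := Real.sqrt a with hsadef
  set sb := Real.sqrt b with hsbdef
  have hsa : 0 < sa := Real.sqrt_pos.mpr haR
  have hsb : 0 < sb := Real.sqrt_pos.mpr hbR
  have hsa2 : (sa:ℂ)^2 = (a:ℂ) := by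
    norm_cast
    rw [hsadef, Real.sq_sqrt haR.le]
  have hsb2 : (sb:ℂ)^2 = (b:ℂ) := by
    norm_cast
    rw [hsbdef, Real.sq_sqrt hbR.le]
  have habC : (a:ℂ) + (b:ℂ) = 2*(c:ℂ)+1 := by exact_mod_cast habZ.trans hdZ
  have hdC : (d:ℂ) = 2*(c:ℂ)+1 := by exact_mod_cast hdZ
  have hdC0 : (d:ℂ) ≠ 0 := Nat.cast_ne_zero.mpr hd0.ne'
  -- eta
  set η : ℂ := -((K:ℤ):ℂ) + (sa:ℂ)*(sb:ℂ)*I with hηdef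
  have hηim : 0 < η.im := by
    have h : η.im = sa*sb := by rw [hηdef]; simp
    rw [h]; positivity
  have hη'im : 0 < (η + 2*((K:ℤ):ℂ)).im := by
    have h : (η + 2*((K:ℤ):ℂ)).im = η.im := by simp
    rw [h]; exact hηim
  -- conjugate of l0
  have hcl0 : (starRingEnd ℂ) l0 = (sa:ℂ) - I*(sb:ℂ) := by
    rw [hl0, map_add, map_mul, Complex.conj_I, Complex.conj_ofReal, Complex.conj_ofReal]
    ring
  have hre_a : 0 < ((starRingEnd ℂ) l0).re := by
    have h : ((starRingEnd ℂ) l0).re = sa := by rw [hcl0]; simp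
    rw [h]; exact hsa
  have hre_b : 0 < l0.re := by
    have h : l0.re = sa := by rw [hl0]; simp
    rw [h]; exact hsa
  have hl00 : l0 ≠ 0 := by intro h; rw [h] at hre_b; simp at hre_b
  have hcl00 : (starRingEnd ℂ) l0 ≠ 0 := by intro h; rw [h] at hre_a; simp at hre_a
  have hKC : ((K:ℤ):ℂ) = (a:ℂ) - (c:ℂ) - 1 := by rw [hKdef]; push_cast; ring
  -- the Q² identities
  have hQ2a : ((starRingEnd ℂ) l0)^2 = 1 + 2*((-1:ℤ):ℂ)*η := by
    rw [hcl0, hηdef, hKC]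
    push_cast
    linear_combination hsa2 - hsb2 + (sb:ℂ)^2 * Complex.I_sq - habC
  have hQ2b : l0^2 = 1 + 2*((1:ℤ):ℂ)*(η + 2*((K:ℤ):ℂ)) := by
    rw [hl0, hηdef, hKC]
    push_cast
    linear_combination hsa2 - hsb2 + (sb:ℂ)^2 * Complex.I_sq - habC
  have hprod : l0 * (starRingEnd ℂ) l0 = (d:ℂ) := by
    rw [hcl0, hl0, hdC]
    linear_combination hsa2 + hsb2 - (sb:ℂ)^2 * Complex.I_sq + habC
  have hprod2 : l0^2 * ((starRingEnd ℂ) l0)^2 = (d:ℂ)^2 := by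
    linear_combination (l0 * (starRingEnd ℂ) l0 + (d:ℂ)) * hprod
  have hc20 : ((starRingEnd ℂ) l0)^2 ≠ 0 := pow_ne_zero 2 hcl00
  have hl20 : l0^2 ≠ 0 := pow_ne_zero 2 hl00
  -- the two special points
  have hp1 : 2*t0 = η / ((starRingEnd ℂ) l0)^2 := by
    rw [ht0, eq_div_iff hc20]
    have hηeq : 2*η = 1 - ((starRingEnd ℂ) l0)^2 := by linear_combination hQ2a
    field_simp
    linear_combination -(2:ℂ) * (d:ℂ)^2 * hηeq + 2 * hprod2
  have hconjt0 : (starRingEnd ℂ) t0 = (((starRingEnd ℂ) l0)^2 - (d:ℂ)^2) / (4*(d:ℂ)^2) := by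
    rw [ht0, map_div₀, map_sub, map_pow, map_mul, map_pow, map_ofNat, map_natCast]
  have hp2 : 2*(-(starRingEnd ℂ) t0) = (η + 2*((K:ℤ):ℂ)) / l0^2 := by
    rw [hconjt0, eq_div_iff hl20]
    have hηeq : 2*(η + 2*((K:ℤ):ℂ)) = l0^2 - 1 := by linear_combination -hQ2b
    field_simp
    linear_combination -(2:ℂ) * (d:ℂ)^2 * hηeq - 2 * hprod2
  -- apply the transformations
  have hT0a : jacobiTheta₂ 0 (2*t0) = (starRingEnd ℂ) l0 * jacobiTheta₂ 0 η := by
    rw [hp1]; exact theta3_transform (-1) hηim hQ2a hre_a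
  have hT0b : jacobiTheta₂ 0 (2*(-(starRingEnd ℂ) t0)) = l0 * jacobiTheta₂ 0 η := by
    rw [hp2, theta3_transform 1 hη'im hQ2b hre_b, jt2_per 0 η K]
  have hT1a : Th2 (2*t0) = (starRingEnd ℂ) l0 * Th2 η := by
    rw [hp1]; exact theta2_transform (-1) hηim hQ2a hre_a
  have hT1b : Th2 (2*(-(starRingEnd ℂ) t0)) = l0 * (I^K * Th2 η) := by
    rw [hp2, theta2_transform 1 hη'im hQ2b hre_b, th2_per η K]
  constructor
  · rw [theta0_eq, theta0_eq, hT0a, hT0b]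
    ring
  · rw [theta1_eq, theta1_eq, hT1a, hT1b]
    linear_combination ((starRingEnd ℂ) l0 * l0 * Th2 η) * hfinal
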